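/- With L, c as in the abstract commutator setting with c(θ,⊤) = θ for all θ, every complemented element of L is compact in L; that is, if α has a complement and α ≤ ⨆_{i∈I} α_i, and ⊤ is compact in L, then α ≤ ⨆_{j∈F} α_j for some finite F ⊆ I. -/

import Mathlib

namespace Reticulation

variable {L : Type*} [CompleteLattice L]

/-- `p` is a prime element with respect to the abstract commutator `c`. -/
def IsPrimeEl (c : L → L → L) (p : L) : Prop :=
  p ≠ ⊤ ∧ ∀ a b : L, c a b ≤ p → a ≤ p ∨ b ≤ p

/-- The radical of `θ`: infimum of all prime elements above `θ`. -/
def rho (c : L → L → L) (θ : L) : L :=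
  sInf {p : L | IsPrimeEl c p ∧ θ ≤ p}

/-- `itc c α β n` is the iterated commutator `[α,β]^(n+1)`. -/
def itc (c : L → L → L) (α β : L) : ℕ → L
  | 0 => c α β
  | n + 1 => c (itc c α β n) (itc c α β n)

/-- `expc c α β n` is the iterated commutator `[α,β]^n`, for `n ≥ 1`. -/
def expc (c : L → L → L) (α β : L) (n : ℕ) : L :=
  itc c α β (n - 1)

/-- The December 2024 Mathlib definition of a compact element of a complete lattice
(`CompleteLattice.IsCompactElement`), restated here with its old meaning. -/
def CompleteLattice.IsCompactElement {α : Type*} [CompleteLattice α] (k : α) : Prop :=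
  ∀ s : Set α, k ≤ sSup s → ∃ t : Finset α, ↑t ⊆ s ∧ k ≤ t.sup id

theorem complemented_is_compact (c : L → L → L)
    (hcomm : ∀ a b : L, c a b = c b a)
    (hdist : ∀ (s : Set L) (b : L), c (sSup s) b = ⨆ a ∈ s, c a b)
    (hle : ∀ a b : L, c a b ≤ a ⊓ b)
    (htop : ∀ θ : L, c θ ⊤ = θ)
    (htopc : CompleteLattice.IsCompactElement (⊤ : L)) :
    ∀ α : L, (∃ β : L, α ⊔ β = ⊤ ∧ α ⊓ β = ⊥) →
      ∀ {ι : Type*} (a : ι → L), α ≤ ⨆ i, a i →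
        ∃ F : Finset ι, α ≤ ⨆ i ∈ F, a i := by
  intro α ⟨β, hsup, hinf⟩ ι a hα
  -- binary distributivity
  have hdist2 : ∀ x y z : L, c x (y ⊔ z) = c x y ⊔ c x z := by
    intro x y z
    rw [hcomm x (y ⊔ z), hcomm x y, hcomm x z, ← sSup_pair, hdist, iSup_insert, iSup_singleton]
  set b : Option ι → L := fun o => o.elim β a with hb
  have htot : (⊤ : L) ≤ ⨆ o, b o := by
    rw [← hsup]
    apply sup_le
    · exact le_trans hα (le_trans (iSup_le fun i => le_iSup b (some i)) le_rfl)
    · exact le_iSup b none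
  obtain ⟨t, ht⟩ := _root_.CompleteLattice.IsCompactElement.exists_finset_of_le_iSup L ((_root_.CompleteLattice.isCompactElement_iff_exists_le_sSup_of_le_sSup L (⊤ : L)).mpr htopc) b htot
  refine ⟨t.eraseNone, ?_⟩
  have hbd : (⨆ o ∈ t, b o) ≤ β ⊔ ⨆ i ∈ t.eraseNone, a i := by
    apply iSup₂_le
    rintro (_|i) ho
    · exact le_sup_left
    · exact le_sup_of_le_right (le_iSup₂ (f := fun i _ => a i) i
        (Finset.mem_eraseNone.mpr ho))
  have htop' : (⊤ : L) ≤ β ⊔ ⨆ i ∈ t.eraseNone, a i := le_trans ht hbd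
  have h1 : α = c α (β ⊔ ⨆ i ∈ t.eraseNone, a i) := by
    conv_lhs => rw [← htop α]
    congr 1
    exact le_antisymm htop' le_top
  rw [h1, hdist2]
  apply sup_le
  · calc c α β ≤ α ⊓ β := hle α β
    _ = ⊥ := hinf
    _ ≤ _ := bot_le
  · exact le_trans (hle α _) inf_le_right


end Reticulation
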